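/- For all integers m ≥ 2, d_0 = (√π/2) * Γ(m+1)/Γ(m+1/2) - m/(2m-1), where d_0 = ∑_{j=1}^{m-1} c_j with c_j as above. -/

import Mathlib

open Finset Real

private lemma prodA (n : ℕ) :
    ∏ j ∈ Finset.Icc 1 n, ((2 * (j : ℝ) - 1) / (2 * (j : ℝ)))
      = (Nat.centralBinom n : ℝ) / 4 ^ n := by
  induction n with
  | zero => simp [Nat.centralBinom]
  | succ n ih =>
    rw [Finset.prod_Icc_succ_top (by omega), ih]
    have h' : ((n : ℝ) + 1) * (Nat.centralBinom (n + 1) : ℝ)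
        = 2 * (2 * (n : ℝ) + 1) * (Nat.centralBinom n : ℝ) := by
      exact_mod_cast congrArg (Nat.cast : ℕ → ℝ) (Nat.succ_mul_centralBinom_succ n)
    have hn1 : ((n : ℝ) + 1) ≠ 0 := by positivity
    have h40 : (4 : ℝ) ^ n ≠ 0 := by positivity
    push_cast
    field_simp
    linear_combination (-2 * (4 : ℝ) ^ n) * h'

private lemma sumHalf (n : ℕ) :
    2 * (∑ i ∈ Finset.range n, (2 * n).choose i) + Nat.centralBinom n = 4 ^ n := by
  have key : ∑ i ∈ Finset.range (n + 1), (2 * n + 1).choose i = 4 ^ n :=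
    Nat.sum_range_choose_halfway n
  rw [Finset.sum_range_succ'] at key
  have h1 : ∀ i, (2 * n + 1).choose (i + 1) = (2 * n).choose i + (2 * n).choose (i + 1) :=
    fun i => Nat.choose_succ_succ (2 * n) i
  simp only [h1, Finset.sum_add_distrib] at key
  have h2 : (∑ i ∈ Finset.range n, (2 * n).choose (i + 1)) + (2 * n).choose 0
      = ∑ i ∈ Finset.range (n + 1), (2 * n).choose i := (Finset.sum_range_succ' _ _).symm
  rw [Finset.sum_range_succ] at h2
  have h3 : (2 * n).choose n = Nat.centralBinom n := (Nat.centralBinom_eq_two_mul_choose n).symm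
  simp [Nat.choose_zero_right] at key h2
  omega

private lemma gammaHalf (n : ℕ) :
    Real.Gamma ((n : ℝ) + 1 / 2)
      = (Nat.factorial (2 * n) : ℝ) * Real.sqrt π / (4 ^ n * (Nat.factorial n : ℝ)) := by
  induction n with
  | zero => simpa using Real.Gamma_one_half_eq
  | succ n ih =>
    have h : ((n : ℝ) + 1) + 1 / 2 = ((n : ℝ) + 1 / 2) + 1 := by ring
    have hG := Real.Gamma_add_one (s := (n : ℝ) + 1 / 2) (by
      have : (0 : ℝ) < (n : ℝ) + 1 / 2 := by positivity
      exact this.ne')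
    push_cast
    rw [h, hG, ih]
    have e1 : 2 * (n + 1) = (2 * n + 1) + 1 := by ring
    rw [e1, Nat.factorial_succ, Nat.factorial_succ, Nat.factorial_succ]
    have h4 : (4 : ℝ) ^ n ≠ 0 := by positivity
    have hf : (Nat.factorial n : ℝ) ≠ 0 := by
      exact_mod_cast Nat.factorial_ne_zero n
    push_cast
    field_simp
    ring

theorem stmt_2 (m : ℕ) (hm : 2 ≤ m)
    (A : ℝ) (hA : A = ∏ j ∈ Finset.Icc 1 m, ((2 * (j : ℝ) - 1) / (2 * (j : ℝ))))
    (c : ℕ → ℝ)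
    (hc : ∀ j, c j = (2 : ℝ) ^ ((2 : ℤ) - 2 * (m : ℤ)) / A *
      (Nat.choose (2 * m - 2) (m - 1 - j) : ℝ))
    (d₀ : ℝ) (hd₀ : d₀ = ∑ j ∈ Finset.Icc 1 (m - 1), c j) :
    d₀ = Real.sqrt π / 2 * (Real.Gamma ((m : ℝ) + 1) / Real.Gamma ((m : ℝ) + 1 / 2))
      - (m : ℝ) / (2 * (m : ℝ) - 1) := by
  obtain ⟨n, rfl⟩ : ∃ n, m = n + 1 := ⟨m - 1, by omega⟩
  have hn : 1 ≤ n := by omega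
  rw [prodA] at hA
  set cb1 : ℝ := (Nat.centralBinom (n + 1) : ℝ) with hcb1def
  set cbn : ℝ := (Nat.centralBinom n : ℝ) with hcbndef
  set S : ℝ := ∑ i ∈ Finset.range n, ((2 * n).choose i : ℝ) with hSdef
  -- nonvanishing facts
  have hcb0 : cb1 ≠ 0 := by
    simp only [hcb1def]; exact_mod_cast Nat.centralBinom_ne_zero (n + 1)
  have hcb0' : cbn ≠ 0 := by
    simp only [hcbndef]; exact_mod_cast Nat.centralBinom_ne_zero n
  have hf0 : (Nat.factorial (n + 1) : ℝ) ≠ 0 := by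
    exact_mod_cast Nat.factorial_ne_zero (n + 1)
  have hf20 : (Nat.factorial (2 * (n + 1)) : ℝ) ≠ 0 := by
    exact_mod_cast Nat.factorial_ne_zero (2 * (n + 1))
  have h40 : (4 : ℝ) ^ (n + 1) ≠ 0 := by positivity
  have h40' : (4 : ℝ) ^ n ≠ 0 := by positivity
  have hsqrt : Real.sqrt π ≠ 0 := by
    have : (0 : ℝ) < π := Real.pi_pos
    positivity
  have h2n1 : (2 : ℝ) * (((n + 1 : ℕ) : ℝ)) - 1 ≠ 0 := by
    push_cast
    have : (1 : ℝ) ≤ (n : ℝ) := by exact_mod_cast hn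
    nlinarith
  have hA0 : A ≠ 0 := by
    rw [hA]
    exact div_ne_zero hcb0 h40
  -- Gamma values
  have hG1 : Real.Gamma (((n + 1 : ℕ) : ℝ) + 1) = (Nat.factorial (n + 1) : ℝ) := by
    exact_mod_cast Real.Gamma_nat_eq_factorial (n + 1)
  have hG2 : Real.Gamma (((n + 1 : ℕ) : ℝ) + 1 / 2)
      = (Nat.factorial (2 * (n + 1)) : ℝ) * Real.sqrt π
        / (4 ^ (n + 1) * (Nat.factorial (n + 1) : ℝ)) := by
    have := gammaHalf (n + 1)
    push_cast at this ⊢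
    exact this
  have hG20 : Real.Gamma (((n + 1 : ℕ) : ℝ) + 1 / 2) ≠ 0 := by
    rw [hG2]
    apply div_ne_zero (mul_ne_zero hf20 hsqrt) (mul_ne_zero h40 hf0)
  -- factorial-centralBinom relation
  have hfcb : cb1 * (Nat.factorial (n + 1) : ℝ) * (Nat.factorial (n + 1) : ℝ)
      = (Nat.factorial (2 * (n + 1)) : ℝ) := by
    have h0 := Nat.choose_mul_factorial_mul_factorial
      (show n + 1 ≤ 2 * (n + 1) by omega)
    have h2 : 2 * (n + 1) - (n + 1) = n + 1 := by omega
    rw [h2] at h0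
    simp only [hcb1def, Nat.centralBinom]
    exact_mod_cast congrArg (Nat.cast : ℕ → ℝ) h0
  -- the Gamma side value
  have hGval : Real.sqrt π / 2 *
      (Real.Gamma (((n + 1 : ℕ) : ℝ) + 1) / Real.Gamma (((n + 1 : ℕ) : ℝ) + 1 / 2))
      = 4 ^ (n + 1) / (2 * cb1) := by
    rw [hG1, hG2]
    field_simp
    linear_combination hfcb
  -- the power of two
  have hpow : (2 : ℝ) ^ ((2 : ℤ) - 2 * ((n + 1 : ℕ) : ℤ)) = 1 / 4 ^ n := by
    have e : (2 : ℤ) - 2 * ((n + 1 : ℕ) : ℤ) = -((2 * n : ℕ) : ℤ) := by push_cast; ring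
    rw [e, zpow_neg, zpow_natCast, pow_mul]
    norm_num
  -- rewrite the sum
  have hidx : ∀ j ∈ Finset.Icc 1 n, ((2 * (n + 1) - 2).choose ((n + 1) - 1 - j) : ℝ)
      = ((2 * n).choose (n - j) : ℝ) := by
    intro j hj
    congr 2 <;> omega
  have hre : ∑ j ∈ Finset.Icc 1 n, ((2 * n).choose (n - j) : ℝ) = S := by
    rw [hSdef]
    have e : Finset.Icc 1 n = Finset.Ico 1 (n + 1) := by rw [Finset.Ico_add_one_right_eq_Icc]
    rw [e, Finset.sum_Ico_eq_sum_range]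
    simp only [Nat.add_sub_cancel]
    rw [← Finset.sum_range_reflect]
    apply Finset.sum_congr rfl
    intro i hi
    simp only [Finset.mem_range] at hi
    have e2 : n - (1 + (n - 1 - i)) = i := by omega
    rw [e2]
  have hsum : d₀ = 4 * S / cb1 := by
    rw [hd₀]
    simp only [Nat.add_sub_cancel]
    calc ∑ j ∈ Finset.Icc 1 n, c j
        = ∑ j ∈ Finset.Icc 1 n, (2 : ℝ) ^ ((2 : ℤ) - 2 * ((n + 1 : ℕ) : ℤ)) / A *
            ((2 * n).choose (n - j) : ℝ) := by
          apply Finset.sum_congr rfl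
          intro j hj
          rw [hc j, hidx j hj]
      _ = (2 : ℝ) ^ ((2 : ℤ) - 2 * ((n + 1 : ℕ) : ℤ)) / A *
            ∑ j ∈ Finset.Icc 1 n, ((2 * n).choose (n - j) : ℝ) := by
          rw [Finset.mul_sum]
      _ = 4 * S / cb1 := by
          rw [hre, hpow, hA]
          rw [pow_succ]
          field_simp
  -- the key nat identities
  have hSR : 2 * S + cbn = 4 ^ n := by
    simp only [hSdef, hcbndef]
    exact_mod_cast congrArg (Nat.cast : ℕ → ℝ) (sumHalf n)
  have hcbR : ((n : ℝ) + 1) * cb1 = 2 * (2 * (n : ℝ) + 1) * cbn := by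
    simp only [hcb1def, hcbndef]
    exact_mod_cast congrArg (Nat.cast : ℕ → ℝ) (Nat.succ_mul_centralBinom_succ n)
  rw [hsum, hGval]
  rw [eq_sub_iff_add_eq, div_add_div _ _ hcb0 h2n1, div_eq_div_iff (mul_ne_zero hcb0 h2n1)
    (by positivity)]
  push_cast
  push_cast at h2n1
  rw [pow_succ]
  linear_combination (4 * (2 * (n:ℝ) + 1) * cb1) * hSR + (2 * cb1) * hcbR
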